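/- For any complex number z and any nonnegative integer i with i ≤ L (where L is a positive integer), the generalized binomial coefficient satisfies |C(z, i)| ≤ e^L · ((|z| + L)/L)^L. -/

import Mathlib

open Finset

/-- Generalized binomial coefficient C(z,i) = z(z-1)⋯(z-i+1)/i! for complex z. -/
noncomputable def cbinom (z : ℂ) (i : ℕ) : ℂ :=
  (∏ k ∈ Finset.range i, (z - k)) / (i.factorial : ℂ)

/-- For z ∈ ℂ and 0 ≤ i ≤ L (L a positive integer),
    |C(z,i)| ≤ e^L ((|z|+L)/L)^L. -/
theorem binom_bound (L : ℕ) (hL : 0 < L) (z : ℂ) (i : ℕ) (hi : i ≤ L) :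
    ‖cbinom z i‖ ≤
      Real.exp L * ((‖z‖ + L) / L) ^ L := by
  have hL0 : (0:ℝ) < L := by exact_mod_cast hL
  set A : ℝ := ‖z‖ + L with hA
  have hA1 : (L:ℝ) ≤ A := le_add_of_nonneg_left (norm_nonneg _)
  have hApos : 0 < A := lt_of_lt_of_le hL0 hA1
  have hprod : ‖∏ k ∈ Finset.range i, (z - k)‖ ≤ A ^ i := by
    rw [norm_prod]
    calc ∏ k ∈ Finset.range i, ‖z - k‖
        ≤ ∏ _k ∈ Finset.range i, A := by
          apply Finset.prod_le_prod (fun _ _ => norm_nonneg _)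
          intro k hk
          have hk' : (k:ℝ) ≤ L := by
            have := Finset.mem_range.mp hk
            exact_mod_cast le_of_lt (lt_of_lt_of_le this hi)
          calc ‖z - k‖ ≤ ‖z‖ + ‖(k:ℂ)‖ :=
                norm_sub_le _ _
            _ ≤ A := by
                rw [Complex.norm_natCast]
                exact add_le_add le_rfl hk'
      _ = A ^ i := by rw [Finset.prod_const, Finset.card_range]
  have habs : ‖cbinom z i‖ ≤ A ^ i / i.factorial := by
    rw [cbinom, norm_div, Complex.norm_natCast]
    exact div_le_div_of_nonneg_right hprod (by positivity)
  refine habs.trans ?_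
  have key : A ^ i / i.factorial = (A / L) ^ i * ((L:ℝ) ^ i / i.factorial) := by
    field_simp
    rw [div_pow, div_mul_cancel₀ _ (pow_ne_zero _ hL0.ne')]
  rw [key]
  have h1 : (A / L) ^ i ≤ (A / L) ^ L :=
    pow_le_pow_right₀ ((one_le_div hL0).mpr hA1) hi
  have h2 : (L:ℝ) ^ i / i.factorial ≤ Real.exp L :=
    Real.pow_div_factorial_le_exp (L:ℝ) (le_of_lt hL0) i
  calc (A / L) ^ i * ((L:ℝ) ^ i / i.factorial)
      ≤ (A / L) ^ L * Real.exp L := by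
        apply mul_le_mul h1 h2 (by positivity) (by positivity)
    _ = Real.exp L * (A / L) ^ L := mul_comm _ _
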